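/- Let C ⊆ ℝⁿ be an open convex cone. Let G : ℝⁿ → ℝ be twice continuously differentiable on C, with ∇G(t • z) = t⁻¹ • ∇G(z) for all z ∈ C and t > 0, and with the Hessian ∇²G(z) self-adjoint and positive definite for every z ∈ C. Fix s ∈ C, s̃ ∈ C and μ > 0, and define δ := s − μ • s̃, x := −μ • ∇G(μ • s̃), x̃ := −∇G(s), and the linear map T² := μ • ∫₀¹ ∇²G(s − t • δ) dt. Then T² is self-adjoint and positive definite, T² s = x, and T² s̃ = x̃. -/

import Mathlib

open scoped RealInnerProductSpace

/-- The dual integral scaling `T² = μ ∫₀¹ ∇²G(s - tδ) dt` is self-adjoint,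
positive definite, maps `s` to `x` and `s̃` to `x̃`. -/
theorem stmt_6 (n : ℕ) (C : Set (EuclideanSpace ℝ (Fin n)))
    (hC : IsOpen C) (hCconv : Convex ℝ C)
    (hcone : ∀ z ∈ C, ∀ t : ℝ, 0 < t → t • z ∈ C)
    (G : EuclideanSpace ℝ (Fin n) → ℝ) (hG : ContDiffOn ℝ 2 G C)
    (hgradhom : ∀ z ∈ C, ∀ t : ℝ, 0 < t → gradient G (t • z) = t⁻¹ • gradient G z)
    (hHessSym : ∀ z ∈ C, ∀ u w : EuclideanSpace ℝ (Fin n),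
        ⟪fderiv ℝ (gradient G) z u, w⟫ = ⟪u, fderiv ℝ (gradient G) z w⟫)
    (hHessPD : ∀ z ∈ C, ∀ u : EuclideanSpace ℝ (Fin n), u ≠ 0 →
        0 < ⟪fderiv ℝ (gradient G) z u, u⟫)
    (s st : EuclideanSpace ℝ (Fin n)) (hs : s ∈ C) (hst : st ∈ C)
    (μ : ℝ) (hμ : 0 < μ)
    (δ x xt : EuclideanSpace ℝ (Fin n))
    (hδ : δ = s - μ • st)
    (hx : x = -(μ • gradient G (μ • st)))
    (hxt : xt = -gradient G s)
    (T2 : EuclideanSpace ℝ (Fin n) →L[ℝ] EuclideanSpace ℝ (Fin n))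
    (hT2 : T2 = μ • ∫ t in (0:ℝ)..1, fderiv ℝ (gradient G) (s - t • δ)) :
    (∀ u w : EuclideanSpace ℝ (Fin n), ⟪T2 u, w⟫ = ⟪u, T2 w⟫) ∧
    (∀ u : EuclideanSpace ℝ (Fin n), u ≠ 0 → 0 < ⟪T2 u, u⟫) ∧
    T2 s = x ∧ T2 st = xt := by
  set H : EuclideanSpace ℝ (Fin n) → EuclideanSpace ℝ (Fin n) →L[ℝ] EuclideanSpace ℝ (Fin n) := fderiv ℝ (gradient G) with hHdef
  have hμst : μ • st ∈ C := hcone st hst μ hμ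
  have hmem : ∀ t ∈ Set.Icc (0:ℝ) 1, s - t • δ ∈ C := by
    intro t ht
    have h : s - t • δ = (1 - t) • s + t • (μ • st) := by rw [hδ]; module
    rw [h]
    exact hCconv hs hμst (by linarith [ht.2]) ht.1 (by ring)
  have hsδ : s - δ = μ • st := by rw [hδ]; abel
  -- regularity of the gradient
  have hfd : ContDiffOn ℝ 1 (fderiv ℝ G) C := hG.fderiv_of_isOpen hC (by norm_num)
  have hgrad_cd : ContDiffOn ℝ 1 (gradient G) C := by
    have h : gradient G = fun z => (InnerProductSpace.toDual ℝ (EuclideanSpace ℝ (Fin n))).symm (fderiv ℝ G z) := rfl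
    rw [h]
    exact (InnerProductSpace.toDual ℝ (EuclideanSpace ℝ (Fin n))).symm.contDiff.comp_contDiffOn hfd
  have hgrad_cont : ContinuousOn (gradient G) C := hgrad_cd.continuousOn
  have hH_cont : ContinuousOn H C := hgrad_cd.continuousOn_fderiv_of_isOpen hC le_rfl
  have hgrad_diff : ∀ z ∈ C, DifferentiableAt ℝ (gradient G) z := fun z hz =>
    (hgrad_cd.differentiableOn one_ne_zero).differentiableAt (hC.mem_nhds hz)
  -- Euler identity
  have heuler : ∀ z ∈ C, H z z = -gradient G z := by
    intro z hz
    have hpath : HasDerivAt (fun t : ℝ => t • z) z 1 := by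
      simpa using (hasDerivAt_id (1:ℝ)).smul_const z
    have hF : HasFDerivAt (gradient G) (H ((1:ℝ) • z)) ((1:ℝ) • z) := by
      rw [one_smul]; exact (hgrad_diff z hz).hasFDerivAt
    have h1 : HasDerivAt (fun t : ℝ => gradient G (t • z)) (H z z) 1 := by
      have := hF.comp_hasDerivAt 1 hpath
      rwa [one_smul] at this
    have h2 : HasDerivAt (fun t : ℝ => t⁻¹ • gradient G z) (-gradient G z) 1 := by
      simpa using (hasDerivAt_inv (x := (1:ℝ)) one_ne_zero).smul_const (gradient G z)
    have heq : (fun t : ℝ => gradient G (t • z)) =ᶠ[nhds (1:ℝ)]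
        (fun t : ℝ => t⁻¹ • gradient G z) := by
      filter_upwards [eventually_gt_nhds zero_lt_one] with t ht
      exact hgradhom z hz t ht
    exact h1.unique (h2.congr_of_eventuallyEq heq)
  -- continuity along the segment
  have hpathc : Continuous (fun t : ℝ => s - t • δ) :=
    continuous_const.sub (continuous_id.smul continuous_const)
  have hHΓ : ContinuousOn (fun t : ℝ => H (s - t • δ)) (Set.Icc 0 1) :=
    hH_cont.comp hpathc.continuousOn hmem
  have hgΓ : ContinuousOn (fun t : ℝ => gradient G (s - t • δ)) (Set.Icc 0 1) :=
    hgrad_cont.comp hpathc.continuousOn hmem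
  have hHI : IntervalIntegrable (fun t : ℝ => H (s - t • δ)) MeasureTheory.volume 0 1 := by
    apply ContinuousOn.intervalIntegrable
    rwa [Set.uIcc_of_le zero_le_one]
  have hIu : ∀ u : EuclideanSpace ℝ (Fin n), IntervalIntegrable (fun t : ℝ => H (s - t • δ) u)
      MeasureTheory.volume 0 1 := by
    intro u
    apply ContinuousOn.intervalIntegrable
    rw [Set.uIcc_of_le zero_le_one]
    exact hHΓ.clm_apply continuousOn_const
  set A : EuclideanSpace ℝ (Fin n) →L[ℝ] EuclideanSpace ℝ (Fin n) := ∫ t in (0:ℝ)..1, H (s - t • δ) with hA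
  have hApply : ∀ v : EuclideanSpace ℝ (Fin n), A v = ∫ t in (0:ℝ)..1, H (s - t • δ) v := fun v =>
    ContinuousLinearMap.intervalIntegral_apply hHI v
  have hinner : ∀ u w : EuclideanSpace ℝ (Fin n), ⟪A u, w⟫ = ∫ t in (0:ℝ)..1, ⟪H (s - t • δ) u, w⟫ := by
    intro u w
    rw [hApply u]
    have hcc := (innerSL ℝ w).intervalIntegral_comp_comm (hIu u)
    simp only [innerSL_apply_apply] at hcc
    calc ⟪∫ t in (0:ℝ)..1, H (s - t • δ) u, w⟫
        = ⟪w, ∫ t in (0:ℝ)..1, H (s - t • δ) u⟫ := real_inner_comm _ _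
      _ = ∫ t in (0:ℝ)..1, ⟪w, H (s - t • δ) u⟫ := hcc.symm
      _ = ∫ t in (0:ℝ)..1, ⟪H (s - t • δ) u, w⟫ :=
          intervalIntegral.integral_congr fun t _ => real_inner_comm _ _
  -- fundamental theorem of calculus helper
  have ftc : ∀ (c c' : ℝ → ℝ), (∀ t, HasDerivAt c (c' t) t) → Continuous c' →
      (∫ t in (0:ℝ)..1, (c' t • gradient G (s - t • δ) - c t • H (s - t • δ) δ))
        = c 1 • gradient G (s - δ) - c 0 • gradient G s := by
    intro c c' hc hc'
    have hcc : Continuous c := by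
      rw [continuous_iff_continuousAt]; exact fun t => (hc t).continuousAt
    have hderiv : ∀ t ∈ Set.uIcc (0:ℝ) 1,
        HasDerivAt (fun t => c t • gradient G (s - t • δ))
          (c' t • gradient G (s - t • δ) - c t • H (s - t • δ) δ) t := by
      intro t ht
      rw [Set.uIcc_of_le zero_le_one] at ht
      have hmemt := hmem t ht
      have hpath : HasDerivAt (fun t : ℝ => s - t • δ) (-δ) t := by
        simpa using (((hasDerivAt_id t).smul_const δ).const_sub s)
      have h1 : HasDerivAt (fun t : ℝ => gradient G (s - t • δ))
          (H (s - t • δ) (-δ)) t :=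
        by have := ((hgrad_diff _ hmemt).hasFDerivAt).comp_hasDerivAt t hpath; exact this
      have h : HasDerivAt (fun t => c t • gradient G (s - t • δ))
          (c t • H (s - t • δ) (-δ) + c' t • gradient G (s - t • δ)) t := (hc t).smul h1
      convert h using 1
      simp only [map_neg, smul_neg, sub_eq_add_neg]
      abel
    have hint : IntervalIntegrable
        (fun t => c' t • gradient G (s - t • δ) - c t • H (s - t • δ) δ)
        MeasureTheory.volume 0 1 := by
      apply ContinuousOn.intervalIntegrable
      rw [Set.uIcc_of_le zero_le_one]
      exact (hc'.continuousOn.smul hgΓ).sub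
        (hcc.continuousOn.smul (hHΓ.clm_apply continuousOn_const))
    have := intervalIntegral.integral_eq_sub_of_hasDerivAt hderiv hint
    rw [this]
    norm_num
  -- T2 s = x
  have hAs : A s = -gradient G (μ • st) := by
    rw [hApply s]
    have hcong : Set.EqOn (fun t : ℝ => H (s - t • δ) s)
        (fun t : ℝ => (-1 : ℝ) • gradient G (s - t • δ) - (-t) • H (s - t • δ) δ)
        (Set.uIcc 0 1) := by
      intro t ht
      rw [Set.uIcc_of_le zero_le_one] at ht
      have hmemt := hmem t ht
      have hs' : s = (s - t • δ) + t • δ := by module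
      calc H (s - t • δ) s = H (s - t • δ) ((s - t • δ) + t • δ) := by rw [← hs']
        _ = H (s - t • δ) (s - t • δ) + t • H (s - t • δ) δ := by
            rw [map_add, map_smul]
        _ = _ := by rw [heuler _ hmemt]; module
    rw [intervalIntegral.integral_congr hcong,
      ftc (fun t => -t) (fun _ => (-1 : ℝ))
        (fun t => by exact hasDerivAt_neg' t) continuous_const]
    rw [hsδ]
    module
  have hT2s : T2 s = x := by
    rw [hT2, ContinuousLinearMap.smul_apply, hAs, hx, smul_neg]
  -- T2 st = xt
  have hAst : A st = -(μ⁻¹ • gradient G s) := by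
    rw [hApply st]
    have hcong : Set.EqOn (fun t : ℝ => H (s - t • δ) st)
        (fun t : ℝ => (-μ⁻¹ : ℝ) • gradient G (s - t • δ)
          - (μ⁻¹ * (1 - t)) • H (s - t • δ) δ) (Set.uIcc 0 1) := by
      intro t ht
      rw [Set.uIcc_of_le zero_le_one] at ht
      have hmemt := hmem t ht
      have he : μ • st = (s - t • δ) - (1 - t) • δ := by
        rw [hδ]; module
      have h1 : μ • H (s - t • δ) st
          = -gradient G (s - t • δ) - (1 - t) • H (s - t • δ) δ := by
        rw [← map_smul, he, map_sub, map_smul, heuler _ hmemt]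
      have h2 : H (s - t • δ) st = μ⁻¹ • (μ • H (s - t • δ) st) := by
        rw [inv_smul_smul₀ hμ.ne']
      simp only
      rw [h2, h1]
      module
    rw [intervalIntegral.integral_congr hcong,
      ftc (fun t => μ⁻¹ * (1 - t)) (fun _ => (-μ⁻¹ : ℝ))
        (fun t => by
          simpa using (((hasDerivAt_id t).const_sub 1).const_mul μ⁻¹))
        continuous_const]
    module
  have hT2st : T2 st = xt := by
    rw [hT2, ContinuousLinearMap.smul_apply, hAst, hxt, smul_neg,
      smul_smul, mul_inv_cancel₀ hμ.ne', one_smul]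
  -- self-adjointness
  have hsym : ∀ u w : EuclideanSpace ℝ (Fin n), ⟪T2 u, w⟫ = ⟪u, T2 w⟫ := by
    intro u w
    have h1 : ⟪T2 u, w⟫ = μ * ∫ t in (0:ℝ)..1, ⟪H (s - t • δ) u, w⟫ := by
      rw [hT2, ContinuousLinearMap.smul_apply, real_inner_smul_left, hinner u w]
    have h2 : ⟪u, T2 w⟫ = μ * ∫ t in (0:ℝ)..1, ⟪H (s - t • δ) w, u⟫ := by
      rw [hT2, ContinuousLinearMap.smul_apply, real_inner_smul_right,
        real_inner_comm (A w) u, hinner w u]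
    rw [h1, h2]
    congr 1
    refine intervalIntegral.integral_congr fun t ht => ?_
    rw [Set.uIcc_of_le zero_le_one] at ht
    rw [hHessSym _ (hmem t ht) u w, real_inner_comm]
  have hpd : ∀ u : EuclideanSpace ℝ (Fin n), u ≠ 0 → 0 < ⟪T2 u, u⟫ := by
    intro u hu
    rw [hT2, ContinuousLinearMap.smul_apply, real_inner_smul_left, hinner u u]
    apply mul_pos hμ
    apply intervalIntegral.intervalIntegral_pos_of_pos_on
    · apply ContinuousOn.intervalIntegrable
      rw [Set.uIcc_of_le zero_le_one]
      exact (hHΓ.clm_apply continuousOn_const).inner continuousOn_const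
    · intro t ht
      exact hHessPD _ (hmem t ⟨le_of_lt ht.1, le_of_lt ht.2⟩) u hu
    · exact zero_lt_one
  exact ⟨hsym, hpd, hT2s, hT2st⟩
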